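/- Let (A, {•,•}_J) be a Jacobi algebra over a field k. Then the pair (A, A ⊗ A) is a Lie–Rinehart algebra with anchor ρ(a ⊗ b) = a·Φ_b (where Φ_b = {b,•}_J + •·{1,b}_J) and Lie bracket [a ⊗ f, b ⊗ g] = a·b ⊗ {f,g}_J + a·Φ_f(b) ⊗ g − b·Φ_g(a) ⊗ f, where A acts on A ⊗ A via the first tensor factor. -/

import Mathlib

open TensorProduct

section JacobiLR
variable {k A : Type*} [Field k] [CommRing A] [Algebra k A]
variable (JL : A →ₗ[k] A →ₗ[k] A)

noncomputable def PhiJ : A →ₗ[k] A →ₗ[k] A :=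
  JL + (LinearMap.mul k A).flip.comp (JL 1)

@[simp] lemma PhiJ_apply (f c : A) : PhiJ JL f c = JL f c + c * JL 1 f := rfl

lemma Jmul (hskew : ∀ a b, JL a b = -JL b a)
    (hleib : ∀ a b c, JL (a*b) c = a * JL b c + b * JL a c - a*b*JL 1 c)
    (f x y : A) : JL f (x*y) = x * JL f y + y * JL f x + x*y*JL 1 f := by
  rw [hskew f (x*y), hleib x y f, hskew y f, hskew x f]; ring

lemma Phi_one (hskew : ∀ a b, JL a b = -JL b a) (f : A) : PhiJ JL f 1 = 0 := by
  rw [PhiJ_apply, hskew f 1]; ring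

lemma Phi_mul (hskew : ∀ a b, JL a b = -JL b a)
    (hleib : ∀ a b c, JL (a*b) c = a * JL b c + b * JL a c - a*b*JL 1 c)
    (f x y : A) : PhiJ JL f (x*y) = x * PhiJ JL f y + y * PhiJ JL f x := by
  simp only [PhiJ_apply]; rw [Jmul JL hskew hleib]; ring

lemma Phi_lie (hskew : ∀ a b, JL a b = -JL b a)
    (hjac : ∀ a b c, JL a (JL b c) + JL b (JL c a) + JL c (JL a b) = 0)
    (hleib : ∀ a b c, JL (a*b) c = a * JL b c + b * JL a c - a*b*JL 1 c)
    (f g c : A) :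
    PhiJ JL (JL f g) c = PhiJ JL f (PhiJ JL g c) - PhiJ JL g (PhiJ JL f c) := by
  have h1 := hjac f g c
  rw [hskew c f, map_neg, hskew c (JL f g)] at h1
  have h2 := hjac 1 f g
  rw [hskew g 1, map_neg] at h2
  simp only [PhiJ_apply, map_add]
  rw [Jmul JL hskew hleib f c (JL 1 g), Jmul JL hskew hleib g c (JL 1 f)]
  linear_combination (-1 : A) * h1 + c * h2

noncomputable def rhoJ : A ⊗[k] A →ₗ[k] A →ₗ[k] A :=
  TensorProduct.lift (LinearMap.mk₂ k (fun a b => a • PhiJ JL b)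
    (fun a a' b => by rw [add_smul])
    (fun r a b => by rw [smul_assoc])
    (fun a b b' => by rw [map_add, smul_add])
    (fun r a b => by rw [map_smul, smul_comm]))

@[simp] lemma rhoJ_tmul (a b c : A) :
    rhoJ JL (a ⊗ₜ[k] b) c = a * PhiJ JL b c := by
  simp [rhoJ, smul_eq_mul]

noncomputable def brAux (a f : A) : A ⊗[k] A →ₗ[k] A ⊗[k] A :=
  TensorProduct.lift (LinearMap.mk₂ k
    (fun b g => (a*b) ⊗ₜ[k] JL f g + (a * PhiJ JL f b) ⊗ₜ[k] g
        - (b * PhiJ JL g a) ⊗ₜ[k] f)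
    (fun b b' g => by
      simp only [mul_add, map_add, add_mul, add_tmul]; abel)
    (fun r b g => by
      simp only [mul_smul_comm, map_smul, smul_mul_assoc, ← smul_tmul',
        smul_add, smul_sub])
    (fun b g g' => by
      simp only [map_add, LinearMap.add_apply, mul_add,
        add_mul, add_tmul, tmul_add]; abel)
    (fun r b g => by
      simp only [map_smul, LinearMap.smul_apply, mul_smul_comm, tmul_smul,
        ← smul_tmul', smul_add, smul_sub]))

@[simp] lemma brAux_tmul (a f b g : A) :
    brAux JL a f (b ⊗ₜ[k] g)
      = (a*b) ⊗ₜ[k] JL f g + (a * PhiJ JL f b) ⊗ₜ[k] g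
        - (b * PhiJ JL g a) ⊗ₜ[k] f := by
  simp [brAux]

noncomputable def brJ : A ⊗[k] A →ₗ[k] A ⊗[k] A →ₗ[k] A ⊗[k] A :=
  TensorProduct.lift (LinearMap.mk₂ k (brAux JL)
    (fun a a' f => by
      apply TensorProduct.ext'; intro b g
      simp only [brAux_tmul, LinearMap.add_apply, add_mul, mul_add, map_add,
        add_tmul, tmul_add]; abel)
    (fun r a f => by
      apply TensorProduct.ext'; intro b g
      simp only [brAux_tmul, LinearMap.smul_apply, smul_mul_assoc, map_smul,
        mul_smul_comm, ← smul_tmul', smul_add, smul_sub])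
    (fun a f f' => by
      apply TensorProduct.ext'; intro b g
      simp only [brAux_tmul, LinearMap.add_apply, map_add,
        mul_add, add_mul, add_tmul, tmul_add]; abel)
    (fun r a f => by
      apply TensorProduct.ext'; intro b g
      simp only [brAux_tmul, LinearMap.smul_apply, map_smul,
        smul_mul_assoc, mul_smul_comm, tmul_smul,
        ← smul_tmul', smul_add, smul_sub]))

@[simp] lemma brJ_tmul (a f b g : A) :
    brJ JL (a ⊗ₜ[k] f) (b ⊗ₜ[k] g)
      = (a*b) ⊗ₜ[k] JL f g + (a * PhiJ JL f b) ⊗ₜ[k] g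
        - (b * PhiJ JL g a) ⊗ₜ[k] f := by
  simp [brJ]

lemma rho_Asmul (a : A) (u : A ⊗[k] A) (c : A) :
    rhoJ JL (a • u) c = a * rhoJ JL u c := by
  induction u using TensorProduct.induction_on with
  | zero => simp
  | tmul x y => rw [smul_tmul', smul_eq_mul, rhoJ_tmul, rhoJ_tmul, mul_assoc]
  | add x y hx hy =>
      rw [smul_add, map_add, map_add, LinearMap.add_apply, LinearMap.add_apply,
        hx, hy, mul_add]

lemma rho_der (hskew : ∀ a b, JL a b = -JL b a)
    (hleib : ∀ a b c, JL (a*b) c = a * JL b c + b * JL a c - a*b*JL 1 c)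
    (u : A ⊗[k] A) (x y : A) :
    rhoJ JL u (x * y) = x * rhoJ JL u y + y * rhoJ JL u x := by
  induction u using TensorProduct.induction_on with
  | zero => simp
  | tmul a b => rw [rhoJ_tmul, rhoJ_tmul, rhoJ_tmul, Phi_mul JL hskew hleib]; ring
  | add u v hu hv =>
      rw [map_add, LinearMap.add_apply, LinearMap.add_apply,
        LinearMap.add_apply, hu, hv]; ring

lemma br_skew (hskew : ∀ a b, JL a b = -JL b a) (u v : A ⊗[k] A) :
    brJ JL u v = - brJ JL v u := by
  induction u using TensorProduct.induction_on with
  | zero => simp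
  | tmul a f =>
      induction v using TensorProduct.induction_on with
      | zero => simp
      | tmul b g =>
          rw [brJ_tmul, brJ_tmul, hskew f g, mul_comm a b, tmul_neg]
          abel
      | add x y hx hy =>
          rw [map_add, map_add, LinearMap.add_apply, hx, hy]; abel
  | add x y hx hy =>
      rw [map_add, LinearMap.add_apply, map_add, hx, hy]; abel

lemma rho_br (hskew : ∀ a b, JL a b = -JL b a)
    (hjac : ∀ a b c, JL a (JL b c) + JL b (JL c a) + JL c (JL a b) = 0)
    (hleib : ∀ a b c, JL (a*b) c = a * JL b c + b * JL a c - a*b*JL 1 c)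
    (u v : A ⊗[k] A) (c : A) :
    rhoJ JL (brJ JL u v) c = rhoJ JL u (rhoJ JL v c) - rhoJ JL v (rhoJ JL u c) := by
  induction u using TensorProduct.induction_on with
  | zero => simp
  | tmul a f =>
      induction v using TensorProduct.induction_on with
      | zero => simp
      | tmul b g =>
          rw [brJ_tmul]
          rw [map_sub, LinearMap.sub_apply, map_add, LinearMap.add_apply]
          simp only [rhoJ_tmul]
          rw [Phi_lie JL hskew hjac hleib,
            Phi_mul JL hskew hleib f b (PhiJ JL g c),
            Phi_mul JL hskew hleib g a (PhiJ JL f c)]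
          ring
      | add x y hx hy =>
          simp only [map_add, LinearMap.add_apply, hx, hy]
          ring
  | add x y hx hy =>
      simp only [map_add, LinearMap.add_apply, hx, hy]
      ring

lemma br_leib (hskew : ∀ a b, JL a b = -JL b a)
    (hleib : ∀ a b c, JL (a*b) c = a * JL b c + b * JL a c - a*b*JL 1 c)
    (u : A ⊗[k] A) (a : A) (v : A ⊗[k] A) :
    brJ JL u (a • v) = a • brJ JL u v + rhoJ JL u a • v := by
  induction u using TensorProduct.induction_on with
  | zero => simp
  | tmul x f =>
      induction v using TensorProduct.induction_on with
      | zero => simp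
      | tmul b g =>
          rw [smul_tmul', smul_eq_mul, brJ_tmul, brJ_tmul, rhoJ_tmul,
            smul_tmul', smul_eq_mul, Phi_mul JL hskew hleib f a b]
          simp only [smul_sub, smul_add, smul_tmul', smul_eq_mul, mul_add,
            add_tmul]
          rw [show x*(a*b) = a*(x*b) by ring,
            show a*b*PhiJ JL g x = a*(b*PhiJ JL g x) by ring,
            show x*(a*PhiJ JL f b) = a*(x*PhiJ JL f b) by ring,
            show x*(b*PhiJ JL f a) = x * PhiJ JL f a * b by ring]
          abel
      | add p q hp hq =>
          rw [smul_add, map_add, map_add, hp, hq, smul_add, smul_add]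
          abel
  | add p q hp hq =>
      simp only [map_add, LinearMap.add_apply, hp, hq, add_smul, smul_add]
      abel

lemma br_leib' (hskew : ∀ a b, JL a b = -JL b a)
    (hleib : ∀ a b c, JL (a*b) c = a * JL b c + b * JL a c - a*b*JL 1 c)
    (a : A) (u v : A ⊗[k] A) :
    brJ JL (a • u) v = a • brJ JL u v - rhoJ JL v a • u := by
  rw [br_skew JL hskew (a • u) v, br_leib JL hskew hleib v a u,
    br_skew JL hskew v u]
  rw [smul_neg, neg_add, sub_eq_add_neg, neg_neg]

lemma br_one (hskew : ∀ a b, JL a b = -JL b a) (f g : A) :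
    brJ JL ((1:A) ⊗ₜ[k] f) ((1:A) ⊗ₜ[k] g) = (1:A) ⊗ₜ[k] JL f g := by
  rw [brJ_tmul, Phi_one JL hskew, Phi_one JL hskew]
  simp

lemma jac_smul (hskew : ∀ a b, JL a b = -JL b a)
    (hjac : ∀ a b c, JL a (JL b c) + JL b (JL c a) + JL c (JL a b) = 0)
    (hleib : ∀ a b c, JL (a*b) c = a * JL b c + b * JL a c - a*b*JL 1 c)
    (u v w : A ⊗[k] A) (a : A) :
    brJ JL u (brJ JL v (a • w)) + brJ JL v (brJ JL (a • w) u)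
      + brJ JL (a • w) (brJ JL u v)
    = a • (brJ JL u (brJ JL v w) + brJ JL v (brJ JL w u)
      + brJ JL w (brJ JL u v)) := by
  rw [br_leib JL hskew hleib v a w, br_leib' JL hskew hleib a w u,
    br_leib' JL hskew hleib a w (brJ JL u v)]
  rw [map_add, map_sub]
  rw [br_leib JL hskew hleib u a (brJ JL v w),
    br_leib JL hskew hleib u (rhoJ JL v a) w,
    br_leib JL hskew hleib v a (brJ JL w u),
    br_leib JL hskew hleib v (rhoJ JL u a) w]
  rw [rho_br JL hskew hjac hleib u v a, br_skew JL hskew w u]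
  rw [smul_add, smul_add, sub_smul, smul_neg]
  abel

lemma jac_add₁ (u u' v w : A ⊗[k] A) :
    brJ JL (u+u') (brJ JL v w) + brJ JL v (brJ JL w (u+u'))
      + brJ JL w (brJ JL (u+u') v)
    = (brJ JL u (brJ JL v w) + brJ JL v (brJ JL w u) + brJ JL w (brJ JL u v))
    + (brJ JL u' (brJ JL v w) + brJ JL v (brJ JL w u') + brJ JL w (brJ JL u' v)) := by
  simp only [map_add, LinearMap.add_apply]
  abel

lemma jacobiJ (hskew : ∀ a b, JL a b = -JL b a)
    (hjac : ∀ a b c, JL a (JL b c) + JL b (JL c a) + JL c (JL a b) = 0)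
    (hleib : ∀ a b c, JL (a*b) c = a * JL b c + b * JL a c - a*b*JL 1 c)
    (u v w : A ⊗[k] A) :
    brJ JL u (brJ JL v w) + brJ JL v (brJ JL w u) + brJ JL w (brJ JL u v) = 0 := by
  have cyc : ∀ x y z : A ⊗[k] A,
      brJ JL x (brJ JL y z) + brJ JL y (brJ JL z x) + brJ JL z (brJ JL x y)
      = brJ JL y (brJ JL z x) + brJ JL z (brJ JL x y) + brJ JL x (brJ JL y z) := by
    intro x y z; abel
  have sm1 : ∀ (x y z : A ⊗[k] A) (a : A),
      brJ JL (a • x) (brJ JL y z) + brJ JL y (brJ JL z (a • x))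
        + brJ JL z (brJ JL (a • x) y)
      = a • (brJ JL x (brJ JL y z) + brJ JL y (brJ JL z x)
          + brJ JL z (brJ JL x y)) := by
    intro x y z a
    have h := jac_smul JL hskew hjac hleib y z x a
    have h2 : brJ JL x (brJ JL y z) + brJ JL y (brJ JL z x) + brJ JL z (brJ JL x y)
        = brJ JL y (brJ JL z x) + brJ JL z (brJ JL x y) + brJ JL x (brJ JL y z) := by
      abel
    rw [h2, ← h]
    abel
  induction u using TensorProduct.induction_on with
  | zero => simp
  | add p q hp hq => rw [jac_add₁, hp, hq, add_zero]
  | tmul a f =>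
    induction v using TensorProduct.induction_on with
    | zero => simp
    | add p q hp hq =>
        rw [cyc, jac_add₁]
        rw [cyc] at hp hq
        rw [hp, hq, add_zero]
    | tmul b g =>
      induction w using TensorProduct.induction_on with
      | zero => simp
      | add p q hp hq =>
          rw [cyc, cyc, jac_add₁]
          rw [cyc, cyc] at hp hq
          rw [hp, hq, add_zero]
      | tmul c h =>
          have e : ∀ x y : A, x ⊗ₜ[k] y = x • ((1:A) ⊗ₜ[k] y) := by
            intro x y; rw [smul_tmul', smul_eq_mul, mul_one]
          rw [e a f, e b g, e c h]
          rw [sm1]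
          rw [cyc, sm1]
          rw [cyc, sm1]
          rw [br_one JL hskew, br_one JL hskew, br_one JL hskew,
            br_one JL hskew, br_one JL hskew, br_one JL hskew]
          rw [← tmul_add, ← tmul_add, hjac h f g, tmul_zero, smul_zero,
            smul_zero, smul_zero]

end JacobiLR

/-- For a Jacobi algebra `(A, J)` over a field `k`, the pair
`(A, A ⊗ A)` is a Lie–Rinehart algebra with anchor `ρ (a ⊗ b) = a·Φ_b` and
bracket `[a⊗f, b⊗g] = ab ⊗ J f g + a·Φ_f(b) ⊗ g - b·Φ_g(a) ⊗ f`, where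
`Φ_b c = J b c + c * J 1 b` and `A` acts via the first tensor factor. -/
theorem jacobi_tensor_lie_rinehart
    (k A : Type*) [Field k] [CommRing A] [Algebra k A]
    (J : A → A → A)
    (hbilₗ : ∀ (r : k) (a a' b : A), J (r • a + a') b = r • J a b + J a' b)
    (hbilᵣ : ∀ (r : k) (a b b' : A), J a (r • b + b') = r • J a b + J a b')
    (hskew : ∀ a b, J a b = - J b a)
    (hjacobi : ∀ a b c, J a (J b c) + J b (J c a) + J c (J a b) = 0)
    (hleib : ∀ a b c, J (a * b) c = a * J b c + b * J a c - a * b * J 1 c) :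
    ∃ (br : A ⊗[k] A → A ⊗[k] A → A ⊗[k] A) (ρ : A ⊗[k] A → A → A),
      -- defining formulas on simple tensors
      (∀ a f b g : A,
        br (a ⊗ₜ[k] f) (b ⊗ₜ[k] g)
          = (a * b) ⊗ₜ[k] J f g
            + (a * (J f b + b * J 1 f)) ⊗ₜ[k] g
            - (b * (J g a + a * J 1 g)) ⊗ₜ[k] f) ∧
      (∀ a b c : A, ρ (a ⊗ₜ[k] b) c = a * (J b c + c * J 1 b)) ∧
      -- `k`-bilinearity of the bracket
      (∀ (r : k) (u u' v : A ⊗[k] A), br (r • u + u') v = r • br u v + br u' v) ∧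
      (∀ (r : k) (u v v' : A ⊗[k] A), br u (r • v + v') = r • br u v + br u v') ∧
      -- Lie algebra axioms
      (∀ u v, br u v = - br v u) ∧
      (∀ u v w, br u (br v w) + br v (br w u) + br w (br u v) = 0) ∧
      -- anchor: `A`-linear, additive, valued in `k`-linear derivations
      (∀ (a : A) (u : A ⊗[k] A) (c : A), ρ (a • u) c = a * ρ u c) ∧
      (∀ (u v : A ⊗[k] A) (c : A), ρ (u + v) c = ρ u c + ρ v c) ∧
      (∀ (u : A ⊗[k] A) (r : k) (x y : A), ρ u (r • x + y) = r • ρ u x + ρ u y) ∧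
      (∀ (u : A ⊗[k] A) (x y : A), ρ u (x * y) = x * ρ u y + y * ρ u x) ∧
      -- anchor is a Lie algebra homomorphism
      (∀ (u v : A ⊗[k] A) (c : A), ρ (br u v) c = ρ u (ρ v c) - ρ v (ρ u c)) ∧
      -- Leibniz rule of a Lie–Rinehart algebra
      (∀ (u : A ⊗[k] A) (a : A) (v : A ⊗[k] A),
        br u (a • v) = a • br u v + ρ u a • v) := by
  have hz : ∀ b, J 0 b = 0 := by
    intro b
    have h := hbilₗ 1 0 0 b
    simp only [one_smul, add_zero] at h
    exact right_eq_add.mp h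
  have hz' : ∀ a, J a 0 = 0 := by
    intro a
    have h := hbilᵣ 1 a 0 0
    simp only [one_smul, add_zero] at h
    exact right_eq_add.mp h
  have ha : ∀ a a' b, J (a + a') b = J a b + J a' b := by
    intro a a' b
    have h := hbilₗ 1 a a' b
    simpa using h
  have hs : ∀ (r : k) a b, J (r • a) b = r • J a b := by
    intro r a b
    have h := hbilₗ r a 0 b
    simpa [hz] using h
  have ha' : ∀ a b b', J a (b + b') = J a b + J a b' := by
    intro a b b'
    have h := hbilᵣ 1 a b b'
    simpa using h
  have hs' : ∀ (r : k) a b, J a (r • b) = r • J a b := by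
    intro r a b
    have h := hbilᵣ r a b 0
    simpa [hz'] using h
  set JL : A →ₗ[k] A →ₗ[k] A :=
    LinearMap.mk₂ k J ha hs ha' hs' with hJL
  have hskewL : ∀ a b, JL a b = -JL b a := hskew
  have hjacL : ∀ a b c, JL a (JL b c) + JL b (JL c a) + JL c (JL a b) = 0 :=
    hjacobi
  have hleibL : ∀ a b c, JL (a*b) c = a * JL b c + b * JL a c - a*b*JL 1 c :=
    hleib
  refine ⟨fun u v => brJ JL u v, fun u c => rhoJ JL u c,
    ?_, ?_, ?_, ?_, ?_, ?_, ?_, ?_, ?_, ?_, ?_, ?_⟩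
  · intro a f b g
    simp only [brJ_tmul, PhiJ_apply, hJL, LinearMap.mk₂_apply]
  · intro a b c
    simp only [rhoJ_tmul, PhiJ_apply, hJL, LinearMap.mk₂_apply]
  · intro r u u' v
    simp only [map_add, map_smul, LinearMap.add_apply, LinearMap.smul_apply]
  · intro r u v v'
    simp only [map_add, map_smul]
  · exact br_skew JL hskewL
  · exact jacobiJ JL hskewL hjacL hleibL
  · exact fun a u c => rho_Asmul JL a u c
  · intro u v c
    simp only [map_add, LinearMap.add_apply]
  · intro u r x y
    simp only [map_add, map_smul]
  · exact fun u x y => rho_der JL hskewL hleibL u x y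
  · exact fun u v c => rho_br JL hskewL hjacL hleibL u v c
  · exact fun u a v => br_leib JL hskewL hleibL u a v
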